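/- arXiv:2002.09465 — 2 statements merged into one kernel-verified Lean document; each statement's English description precedes it below -/
import Mathlib

section
/- Flattening lemma: Let q_1,...,q_k be probability distributions over [N]. There exists N' with N ≤ N' ≤ (k+1)N and a stochastic kernel (randomized map) φ from [N] to [N'] such that for every a in [N'] and every i in [k], the pushforward distribution satisfies 1/(2N') ≤ (φ∘q_i)(a) ≤ 1/N, and moreover for all i, i', the total variation distance satisfies d_TV(φ∘q_i, φ∘q_{i'}) = (1/2)·d_TV(q_i, q_{i'}). -/
set_option maxHeartbeats 1000000 in
/-- Flattening lemma. -/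
theorem stmt1 (N k : ℕ) (hN : 0 < N) (hk : 0 < k)
    (q : Fin k → Fin N → ℝ)
    (hq_nonneg : ∀ i a, 0 ≤ q i a)
    (hq_sum : ∀ i, ∑ a, q i a = 1) :
    ∃ N' : ℕ, N ≤ N' ∧ N' ≤ (k + 1) * N ∧
      ∃ φ : Fin N → Fin N' → ℝ,
        (∀ a b, 0 ≤ φ a b) ∧
        (∀ a, ∑ b, φ a b = 1) ∧
        (∀ (b : Fin N') (i : Fin k),
          1 / (2 * (N' : ℝ)) ≤ ∑ a, q i a * φ a b ∧
          ∑ a, q i a * φ a b ≤ 1 / (N : ℝ)) ∧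
        (∀ i i' : Fin k,
          (1 / 2) * ∑ b, |(∑ a, q i a * φ a b) - (∑ a, q i' a * φ a b)| =
            (1 / 2) * ((1 / 2) * ∑ a, |q i a - q i' a|)) := by
  -- number of copies of atom a
  set s : Fin N → ℕ := fun a => max 1 ⌈(N : ℝ) * ∑ i, q i a⌉₊ with hs_def
  have hs_pos : ∀ a, 0 < s a := fun a => lt_max_of_lt_left one_pos
  have hsum_nonneg : ∀ a, 0 ≤ ∑ i, q i a := fun a =>
    Finset.sum_nonneg fun i _ => hq_nonneg i a
  -- s a ≥ N * q i a
  have hs_ge : ∀ (i : Fin k) (a : Fin N), (N : ℝ) * q i a ≤ (s a : ℝ) := by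
    intro i a
    have h1 : (N : ℝ) * q i a ≤ (N : ℝ) * ∑ j, q j a := by
      apply mul_le_mul_of_nonneg_left _ (Nat.cast_nonneg N)
      exact Finset.single_le_sum (fun j _ => hq_nonneg j a) (Finset.mem_univ i)
    have h2 : ((N : ℝ) * ∑ j, q j a) ≤ (⌈(N : ℝ) * ∑ j, q j a⌉₊ : ℝ) := Nat.le_ceil _
    have h3 : (⌈(N : ℝ) * ∑ j, q j a⌉₊ : ℝ) ≤ (s a : ℝ) := by
      exact_mod_cast le_max_right _ _
    linarith
  set N' : ℕ := ∑ a, s a with hN'_def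
  have hN'_ge : N ≤ N' := by
    calc N = ∑ _a : Fin N, 1 := by simp
    _ ≤ N' := Finset.sum_le_sum fun a _ => hs_pos a
  have hN'_pos : 0 < N' := lt_of_lt_of_le hN hN'_ge
  have hN'R : (0 : ℝ) < (N' : ℝ) := by exact_mod_cast hN'_pos
  have hNR : (0 : ℝ) < (N : ℝ) := by exact_mod_cast hN
  have hN'_le : N' ≤ (k + 1) * N := by
    have : (N' : ℝ) ≤ ((k + 1) * N : ℕ) := by
      push_cast
      calc (N' : ℝ) = ∑ a, (s a : ℝ) := by push_cast [hN'_def]; ring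
      _ ≤ ∑ a : Fin N, (1 + (N : ℝ) * ∑ i, q i a) := by
          apply Finset.sum_le_sum
          intro a _
          have hx : (0:ℝ) ≤ (N : ℝ) * ∑ i, q i a :=
            mul_nonneg (Nat.cast_nonneg N) (hsum_nonneg a)
          rcases max_cases 1 ⌈(N : ℝ) * ∑ i, q i a⌉₊ with ⟨h, _⟩ | ⟨h, _⟩
          · rw [hs_def]; simp only []; rw [h]; push_cast; linarith
          · rw [hs_def]; simp only []; rw [h]
            have := Nat.ceil_lt_add_one hx
            linarith
      _ = (N : ℝ) + (N : ℝ) * ∑ a, ∑ i, q i a := by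
          rw [Finset.sum_add_distrib, Finset.mul_sum]; simp
      _ = (N : ℝ) + (N : ℝ) * k := by
          rw [Finset.sum_comm]
          simp [hq_sum]
      _ = ((k : ℝ) + 1) * N := by ring
    exact_mod_cast this
  -- the equivalence between Fin N' and the sigma type of copies
  have hcard : Fintype.card (Σ a : Fin N, Fin (s a)) = N' := by simp [hN'_def]
  obtain ⟨e⟩ : Nonempty ((Σ a : Fin N, Fin (s a)) ≃ Fin N') :=
    ⟨Fintype.equivFinOfCardEq hcard⟩
  set π : Fin N' → Fin N := fun b => (e.symm b).1 with hπ_def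
  -- key counting lemma
  have key : ∀ g : Fin N → ℝ, ∑ b : Fin N', g (π b) = ∑ a, (s a : ℝ) * g a := by
    intro g
    rw [← Equiv.sum_comp e (fun b => g (π b))]
    simp only [hπ_def, Equiv.symm_apply_apply]
    rw [← Finset.univ_sigma_univ, Finset.sum_sigma]
    simp [mul_comm]
  refine ⟨N', hN'_ge, hN'_le, fun a b =>
    (1 / 2) * (if π b = a then 1 / (s a : ℝ) else 0) + 1 / (2 * N'), ?_, ?_, ?_, ?_⟩
  · intro a b
    have : (0:ℝ) ≤ (if π b = a then 1 / (s a : ℝ) else 0) := by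
      split <;> positivity
    positivity
  · intro a
    have h1 : ∑ b : Fin N', (if π b = a then 1 / (s a : ℝ) else 0) = 1 := by
      have := key (fun a' => if a' = a then 1 / (s a : ℝ) else 0)
      rw [this, Finset.sum_eq_single a]
      · have : (0:ℝ) < (s a : ℝ) := by exact_mod_cast hs_pos a
        rw [if_pos rfl]
        field_simp
      · intro a' _ ha'; simp [ha']
      · simp
    rw [Finset.sum_add_distrib, ← Finset.mul_sum, h1]
    simp only [Finset.sum_const, Finset.card_univ, Fintype.card_fin, nsmul_eq_mul]
    field_simp
    ring
  -- pushforward formula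
  · have push : ∀ (i : Fin k) (b : Fin N'),
        ∑ a, q i a * ((1 / 2) * (if π b = a then 1 / (s a : ℝ) else 0) + 1 / (2 * N'))
          = (1 / 2) * (q i (π b) / (s (π b) : ℝ)) + 1 / (2 * N') := by
      intro i b
      simp only [mul_add]
      rw [Finset.sum_add_distrib]
      have h1 : ∑ a, q i a * ((1 / 2) * (if π b = a then 1 / (s a : ℝ) else 0))
          = (1 / 2) * (q i (π b) / (s (π b) : ℝ)) := by
        rw [Finset.sum_eq_single (π b)]
        · simp; ring
        · intro a' _ ha'; simp [Ne.symm ha']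
        · simp
      have h2 : ∑ a, q i a * (1 / (2 * (N':ℝ))) = 1 / (2 * N') := by
        rw [← Finset.sum_mul, hq_sum, one_mul]
      rw [h1, h2]
    intro b i
    rw [push i b]
    constructor
    · have hspos : (0:ℝ) < (s (π b) : ℝ) := by exact_mod_cast hs_pos (π b)
      have : (0:ℝ) ≤ q i (π b) / (s (π b) : ℝ) := div_nonneg (hq_nonneg i _) hspos.le
      linarith
    · have h1 : q i (π b) / (s (π b) : ℝ) ≤ 1 / N := by
        have hspos : (0:ℝ) < (s (π b) : ℝ) := by exact_mod_cast hs_pos (π b)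
        rw [div_le_div_iff₀ hspos hNR, one_mul, mul_comm]
        exact hs_ge i (π b)
      have h2 : 1 / (2 * (N':ℝ)) ≤ 1 / (2 * N) := by
        apply one_div_le_one_div_of_le (by positivity)
        have : (N:ℝ) ≤ (N':ℝ) := by exact_mod_cast hN'_ge
        linarith
      calc (1 / 2) * (q i (π b) / (s (π b) : ℝ)) + 1 / (2 * (N':ℝ))
          ≤ (1/2) * (1/N) + 1/(2*N) := by linarith
      _ = 1 / N := by
          have hNne : (N:ℝ) ≠ 0 := ne_of_gt hNR
          field_simp
          norm_num
  · intro i i'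
    have push : ∀ (j : Fin k) (b : Fin N'),
        ∑ a, q j a * ((1 / 2) * (if π b = a then 1 / (s a : ℝ) else 0) + 1 / (2 * N'))
          = (1 / 2) * (q j (π b) / (s (π b) : ℝ)) + 1 / (2 * N') := by
      intro j b
      simp only [mul_add]
      rw [Finset.sum_add_distrib]
      have h1 : ∑ a, q j a * ((1 / 2) * (if π b = a then 1 / (s a : ℝ) else 0))
          = (1 / 2) * (q j (π b) / (s (π b) : ℝ)) := by
        rw [Finset.sum_eq_single (π b)]
        · simp; ring
        · intro a' _ ha'; simp [Ne.symm ha']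
        · simp
      have h2 : ∑ a, q j a * (1 / (2 * (N':ℝ))) = 1 / (2 * N') := by
        rw [← Finset.sum_mul, hq_sum, one_mul]
      rw [h1, h2]
    have hterm : ∀ b : Fin N',
        |(∑ a, q i a * ((1 / 2) * (if π b = a then 1 / (s a : ℝ) else 0) + 1 / (2 * N')))
          - (∑ a, q i' a * ((1 / 2) * (if π b = a then 1 / (s a : ℝ) else 0) + 1 / (2 * N')))|
        = (fun a => (1/2) * |q i a - q i' a| / (s a : ℝ)) (π b) := by
      intro b
      rw [push i b, push i' b]
      have hspos : (0:ℝ) < (s (π b) : ℝ) := by exact_mod_cast hs_pos (π b)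
      rw [show (1 / 2) * (q i (π b) / (s (π b) : ℝ)) + 1 / (2 * (N':ℝ))
            - ((1 / 2) * (q i' (π b) / (s (π b) : ℝ)) + 1 / (2 * N'))
          = (1/2) * ((q i (π b) - q i' (π b)) / (s (π b) : ℝ)) by ring]
      rw [abs_mul, abs_of_nonneg (by norm_num : (0:ℝ) ≤ (1:ℝ)/2), abs_div,
        abs_of_pos hspos]
      ring
    rw [Finset.sum_congr rfl (fun b _ => hterm b),
      key (fun a => (1/2) * |q i a - q i' a| / (s a : ℝ))]
    have : ∀ a, (s a : ℝ) * ((1/2) * |q i a - q i' a| / (s a : ℝ))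
        = (1/2) * |q i a - q i' a| := by
      intro a
      have hspos : (0:ℝ) < (s a : ℝ) := by exact_mod_cast hs_pos a
      field_simp
    rw [Finset.sum_congr rfl (fun a _ => this a), ← Finset.mul_sum]
end

section
/- Recursive query-count bound: define Q(k,1) = C·k² and Q(k,t) = C·k^{1+η_t} + Q(k^{1−η_t}, t−1) for t ≥ 2, where η_t = 1/(2^t−1) and k a positive real with k ≥ 1. Then Q(k,t) ≤ C·t·k^{1+1/(2^t−1)} for all t ≥ 1. -/
/-- Recursive query-count bound for the multi-round tournament algorithm. -/
theorem stmt10 (C : ℝ) (hC : 0 < C) (Q : ℝ → ℕ → ℝ)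
    (hQ1 : ∀ k : ℝ, 1 ≤ k → Q k 1 = C * k ^ (2 : ℝ))
    (hQt : ∀ k : ℝ, 1 ≤ k → ∀ t : ℕ, 2 ≤ t →
      Q k t = C * k ^ ((1 : ℝ) + 1 / (2 ^ t - 1)) +
        Q (k ^ ((1 : ℝ) - 1 / (2 ^ t - 1))) (t - 1)) :
    ∀ k : ℝ, 1 ≤ k → ∀ t : ℕ, 1 ≤ t →
      Q k t ≤ C * t * k ^ ((1 : ℝ) + 1 / (2 ^ t - 1)) := by
  intro k hk t
  induction t generalizing k with
  | zero => intro h; omega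
  | succ n ih =>
    intro _
    rcases Nat.eq_zero_or_pos n with hn | hn
    · subst hn
      rw [hQ1 k hk]
      norm_num
    · -- t = n+1 ≥ 2
      have h2 : 2 ≤ n + 1 := by omega
      have hp : (1:ℝ) ≤ (2:ℝ) ^ n := one_le_pow₀ (by norm_num)
      have hpn : (2:ℝ) ≤ (2:ℝ) ^ n := by
        calc (2:ℝ) = 2 ^ 1 := by norm_num
        _ ≤ 2 ^ n := pow_le_pow_right₀ (by norm_num) hn
      have hne : (2:ℝ) ^ n - 1 ≠ 0 := by linarith
      have hne2 : (2:ℝ) ^ (n+1) - 1 ≠ 0 := by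
        have : (2:ℝ) ^ (n+1) = 2 * 2 ^ n := by ring
        rw [this]; nlinarith
      have hη : (0:ℝ) ≤ 1 - 1 / (2 ^ (n+1) - 1) := by
        have h1 : (2:ℝ) ^ (n+1) = 2 * 2 ^ n := by ring
        have h3 : (3:ℝ) ≤ 2 ^ (n+1) - 1 := by rw [h1]; linarith
        have : 1 / ((2:ℝ) ^ (n+1) - 1) ≤ 1 := by
          rw [div_le_one (by linarith)]; linarith
        linarith
      set η : ℝ := 1 / (2 ^ (n+1) - 1) with hηdef
      have hk' : (1:ℝ) ≤ k ^ ((1:ℝ) - η) :=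
        Real.one_le_rpow hk hη
      have hrec := hQt k hk (n+1) h2
      simp only [Nat.add_sub_cancel] at hrec
      have hIH := ih (k ^ ((1:ℝ) - η)) hk' hn
      have hk0 : (0:ℝ) ≤ k := by linarith
      have hexp : ((1:ℝ) - η) * ((1:ℝ) + 1 / (2 ^ n - 1)) = 1 + η := by
        rw [hηdef]
        have h1 : (2:ℝ) ^ (n+1) = 2 * 2 ^ n := by ring
        field_simp
        nlinarith [sq_nonneg ((2:ℝ)^n)]
      have hpow : (k ^ ((1:ℝ) - η)) ^ ((1:ℝ) + 1 / (2 ^ n - 1))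
          = k ^ ((1:ℝ) + η) := by
        rw [← Real.rpow_mul hk0, hexp]
      rw [hpow] at hIH
      rw [hrec]
      have : C * (↑(n+1)) * k ^ ((1:ℝ) + η)
          = C * k ^ ((1:ℝ) + η) + C * ↑n * k ^ ((1:ℝ) + η) := by
        push_cast; ring
      rw [this]
      linarith
end
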